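/- Let (Ω,F,P) be a probability space, p ∈ (0,1), γ : Ω → ℕ an integrable random variable, and T : Ω → ℕ an integrable random variable with T ≤ γ pointwise and with conditional expectation E[T | σ(γ)] = p·γ almost surely. Define the imputed treated-neighbor fraction D̄* : Ω → ℝ by D̄*(ω) = T(ω)/γ(ω) if γ(ω) > 0 and D̄*(ω) = 0 if γ(ω) = 0, and assume D̄*, γ·D̄* are integrable. If P(γ > 0) > 0, then Cov(D̄*, γ) = (E[γ | γ > 0] − E[γ]) · p · P(γ > 0), where E[γ | γ > 0] denotes P(γ > 0)⁻¹ · E[γ·1{γ > 0}]. -/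

import Mathlib

open MeasureTheory ProbabilityTheory

/-- With `D̄*` the imputed treated-neighbor fraction (set to 0 on isolated
nodes), `Cov(D̄*, γ) = (E[γ | γ > 0] − E[γ]) · p · P(γ > 0)`. -/
theorem stmt0
    {Ω : Type*} [MeasurableSpace Ω] (P : Measure Ω) [IsProbabilityMeasure P]
    (p : ℝ) (hp0 : 0 < p) (hp1 : p < 1)
    (γ T : Ω → ℕ) (hγmeas : Measurable γ) (hTmeas : Measurable T)
    (hγint : Integrable (fun ω => (γ ω : ℝ)) P)
    (hTint : Integrable (fun ω => (T ω : ℝ)) P)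
    (hTγ : ∀ ω, T ω ≤ γ ω)
    (hcond : P[fun ω => (T ω : ℝ) | MeasurableSpace.comap γ inferInstance]
      =ᵐ[P] fun ω => p * (γ ω : ℝ))
    (Dstar : Ω → ℝ)
    (hDstar : ∀ ω, Dstar ω = if 0 < γ ω then (T ω : ℝ) / (γ ω : ℝ) else 0)
    (hDint : Integrable Dstar P)
    (hγDint : Integrable (fun ω => (γ ω : ℝ) * Dstar ω) P)
    (hpos : 0 < P {ω | 0 < γ ω}) :
    (∫ ω, Dstar ω * (γ ω : ℝ) ∂P) - (∫ ω, Dstar ω ∂P) * (∫ ω, (γ ω : ℝ) ∂P)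
      = ((P {ω | 0 < γ ω}).toReal⁻¹ * (∫ ω in {ω | 0 < γ ω}, (γ ω : ℝ) ∂P)
          - ∫ ω, (γ ω : ℝ) ∂P) * p * (P {ω | 0 < γ ω}).toReal := by
  set s : Set Ω := {ω | 0 < γ ω} with hs
  have hsm : MeasurableSet s := measurableSet_lt measurable_const hγmeas
  have hm : MeasurableSpace.comap γ inferInstance ≤ ‹MeasurableSpace Ω› :=
    hγmeas.comap_le
  haveI : IsFiniteMeasure (P.trim hm) := ⟨by
    rw [trim_measurableSet_eq hm (@MeasurableSet.univ _ (MeasurableSpace.comap γ inferInstance))]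
    exact measure_lt_top P _⟩
  -- T vanishes where γ = 0
  have hT0 : ∀ ω, γ ω = 0 → T ω = 0 := fun ω h =>
    Nat.le_zero.mp (h ▸ hTγ ω)
  -- Dstar = γ⁻¹ * T
  have hD : ∀ ω, Dstar ω = ((γ ω : ℝ))⁻¹ * (T ω : ℝ) := by
    intro ω
    rw [hDstar ω]
    by_cases h : 0 < γ ω
    · simp [h, div_eq_inv_mul]
    · have h0 : γ ω = 0 := by omega
      simp [h, h0, hT0 ω h0]
  -- Dstar * γ = T
  have hDγ : ∀ ω, Dstar ω * (γ ω : ℝ) = (T ω : ℝ) := by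
    intro ω
    rw [hD ω]
    by_cases h : γ ω = 0
    · simp [h, hT0 ω h]
    · have : (γ ω : ℝ) ≠ 0 := Nat.cast_ne_zero.mpr h
      field_simp
  -- E[Dstar * γ] = E[T] = p E[γ]
  have hET : ∫ ω, (T ω : ℝ) ∂P = p * ∫ ω, (γ ω : ℝ) ∂P := by
    rw [← integral_condExp hm (μ := P) (f := fun ω => (T ω : ℝ)),
      integral_congr_ae hcond, integral_const_mul]
  have h1 : ∫ ω, Dstar ω * (γ ω : ℝ) ∂P = p * ∫ ω, (γ ω : ℝ) ∂P := by
    rw [← hET]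
    exact integral_congr_ae (Filter.Eventually.of_forall hDγ)
  -- E[Dstar] = p * P(s)
  have hf : StronglyMeasurable[MeasurableSpace.comap γ inferInstance]
      (fun ω => ((γ ω : ℝ))⁻¹) := by
    have : Measurable[MeasurableSpace.comap γ inferInstance] γ :=
      Measurable.of_comap_le le_rfl
    exact ((measurable_from_top (f := fun n : ℕ => ((n : ℝ))⁻¹)).comp this).stronglyMeasurable
  have hmul := condExp_mul_of_stronglyMeasurable_left (μ := P) hf
      (hDint.congr (Filter.Eventually.of_forall fun ω => (hD ω))) hTint
  have hE2 : P[Dstar | MeasurableSpace.comap γ inferInstance]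
      =ᵐ[P] fun ω => s.indicator (fun _ => p) ω := by
    have hDeq : Dstar = fun ω => ((γ ω : ℝ))⁻¹ * (T ω : ℝ) := funext hD
    rw [hDeq]
    refine hmul.trans ?_
    filter_upwards [hcond] with ω hω
    simp only [Pi.mul_apply]
    rw [hω]
    by_cases h : 0 < γ ω
    · have : (γ ω : ℝ) ≠ 0 := Nat.cast_ne_zero.mpr (by omega)
      simp only [Set.indicator_of_mem (by exact h : ω ∈ s)]
      field_simp
    · have h0 : γ ω = 0 := by omega
      simp [Set.indicator_of_notMem (by exact h : ω ∉ s), h0]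
  have hED : ∫ ω, Dstar ω ∂P = p * (P s).toReal := by
    rw [← integral_condExp hm (μ := P) (f := Dstar), integral_congr_ae hE2,
      integral_indicator_const _ hsm]
    simp [mul_comm, measureReal_def]
  -- ∫_s γ = ∫ γ
  have hsγ : ∫ ω in s, (γ ω : ℝ) ∂P = ∫ ω, (γ ω : ℝ) ∂P := by
    rw [← integral_indicator hsm]
    refine integral_congr_ae (Filter.Eventually.of_forall fun ω => ?_)
    by_cases h : 0 < γ ω
    · simp [Set.indicator_of_mem (by exact h : ω ∈ s)]
    · have h0 : γ ω = 0 := by omega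
      simp [Set.indicator_of_notMem (by exact h : ω ∉ s), h0]
  have hq : (P s).toReal ≠ 0 := by
    have hne : P s ≠ 0 := hpos.ne'
    have hfin : P s ≠ ⊤ := (measure_lt_top P s).ne
    simp [ENNReal.toReal_eq_zero_iff, hne, hfin]
  rw [h1, hED, hsγ]
  field_simp
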